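/- Identify F₃ = {−1,0,1}, let E = F₃ × F₃, let f be the rank function of the tic-tac-toe matroid on E, and let f*(X) = |X| − 5 + f(E ∖ X) be the rank function of its dual matroid. For i, j ∈ F₃ let L^i_j = {(i,k) : k ∈ F₃, k ≠ j}. Let z_{−1}, z_1 be two distinct elements not in E and let g be a polymatroid on E ∪ {z_{−1}, z_1} with g(X) = f*(X) for every X ⊆ E, such that for each j ∈ {−1, 1}: g({z_j} ∪ L^{−1}_j ∪ L^1_j) = f*(L^{−1}_j ∪ L^1_j) and g(X′ ∪ {z_j}) − g({z_j}) = f*(X′ ∪ L^0_j) − f*(L^0_j) for every X′ ⊆ L^{−1}_j ∪ L^1_j. Then, writing L = {z_{−1}, z_1}, one has g(L) = 2 and g(L ∪ L^i_0) = 3 for every i ∈ F₃; consequently the sets L^{−1}_0, L^0_0, L, L^1_0 form a Vámos configuration in g. -/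
import Mathlib


open Finset

/-- A polymatroid on a finite ground set `E`. -/
def IsPolymatroid {α : Type*} [DecidableEq α] (E : Finset α) (f : Finset α → ℝ) : Prop :=
  f ∅ = 0 ∧
  (∀ ⦃X Y : Finset α⦄, X ⊆ Y → Y ⊆ E → f X ≤ f Y) ∧
  (∀ ⦃X Y : Finset α⦄, X ⊆ E → Y ⊆ E → f (X ∪ Y) + f (X ∩ Y) ≤ f X + f Y)

/-- The sets `L₀, L₁, L₂, L₃` form a Vámos configuration in the polymatroid `g`. -/
def IsVamosConfig {α : Type*} [DecidableEq α] (g : Finset α → ℝ)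
    (L₀ L₁ L₂ L₃ : Finset α) : Prop :=
  g L₀ = 2 ∧ g L₁ = 2 ∧ g L₂ = 2 ∧ g L₃ = 2 ∧
  g (L₀ ∪ L₁) = 3 ∧ g (L₀ ∪ L₂) = 3 ∧ g (L₁ ∪ L₂) = 3 ∧
  g (L₁ ∪ L₃) = 3 ∧ g (L₂ ∪ L₃) = 3 ∧ g (L₀ ∪ L₃) = 4 ∧
  g (L₀ ∪ L₁ ∪ L₂) = 4 ∧ g (L₀ ∪ L₁ ∪ L₃) = 4 ∧
  g (L₀ ∪ L₂ ∪ L₃) = 4 ∧ g (L₁ ∪ L₂ ∪ L₃) = 4 ∧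
  g (L₀ ∪ L₁ ∪ L₂ ∪ L₃) = 4

/-- The points of the affine plane over `F₃`. -/
abbrev Pt := ZMod 3 × ZMod 3

/-- The horizontal line `A_i = {(x, i) : x ∈ F₃}`. -/
def lineA (i : ZMod 3) : Finset Pt := Finset.univ.image (fun x => (x, i))

/-- The vertical line `B_j = {(j, y) : y ∈ F₃}`. -/
def lineB (j : ZMod 3) : Finset Pt := Finset.univ.image (fun y => (j, y))

/-- The circuit-hyperplanes of the tic-tac-toe matroid. -/
def tttCH : Finset (Finset Pt) :=
  (Finset.univ.filter (fun p : ZMod 3 × ZMod 3 => p ≠ (0, 0))).image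
    (fun p => lineA p.1 ∪ lineB p.2)

/-- The rank function of the tic-tac-toe matroid. -/
noncomputable def tttRank (X : Finset Pt) : ℝ :=
  if X ∈ tttCH then 4 else min X.card 5

/-- The rank function of the dual of the tic-tac-toe matroid:
`f*(X) = |X| − 5 + f(E ∖ X)`. -/
noncomputable def tttDualRank (X : Finset Pt) : ℝ :=
  X.card - 5 + tttRank (Finset.univ \ X)

/-- `L^i_j = {(i,k) : k ∈ F₃, k ≠ j}`. -/
def lineL (i j : ZMod 3) : Finset Pt :=
  (Finset.univ.filter (fun k : ZMod 3 => k ≠ j)).image (fun k => (i, k))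

/- ### Auxiliary lemmas -/

lemma dual_val (m k : ℕ) {X : Finset Pt} {v : ℝ}
    (hch : Finset.univ \ X ∉ tttCH) (hm : X.card = m) (hk : (Finset.univ \ X).card = k)
    (hv : (m : ℝ) - 5 + min (k : ℝ) 5 = v) : tttDualRank X = v := by
  rw [tttDualRank, tttRank, if_neg hch, hm, hk, ← hv]

lemma dual_val_ch (m : ℕ) {X : Finset Pt} {v : ℝ}
    (hch : Finset.univ \ X ∈ tttCH) (hm : X.card = m)
    (hv : (m : ℝ) - 5 + 4 = v) : tttDualRank X = v := by
  rw [tttDualRank, tttRank, if_pos hch, hm, ← hv]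

section helpers
variable {zm z1 : Pt ⊕ Fin 2} {g : Finset (Pt ⊕ Fin 2) → ℝ}

lemma not_inl_mem (hzm : zm ∉ (Finset.univ.image Sum.inl : Finset (Pt ⊕ Fin 2)))
    (X : Finset Pt) : zm ∉ X.image Sum.inl :=
  fun h => hzm (Finset.image_subset_image (Finset.subset_univ X) h)

lemma mem_z_not_inl (hzm : zm ∉ (Finset.univ.image Sum.inl : Finset (Pt ⊕ Fin 2)))
    (hz1 : z1 ∉ (Finset.univ.image Sum.inl : Finset (Pt ⊕ Fin 2)))
    {Z : Finset (Pt ⊕ Fin 2)} (hZ : Z ⊆ {zm, z1}) {a} (ha : a ∈ Z) (X : Finset Pt) :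
    a ∉ X.image Sum.inl := by
  have := hZ ha
  simp only [Finset.mem_insert, Finset.mem_singleton] at this
  rcases this with rfl | rfl
  · exact not_inl_mem hzm X
  · exact not_inl_mem hz1 X

lemma union_mixed (X Y : Finset Pt) (Z W : Finset (Pt ⊕ Fin 2)) :
    (X.image Sum.inl ∪ Z) ∪ (Y.image Sum.inl ∪ W)
      = (X ∪ Y).image Sum.inl ∪ (Z ∪ W) := by
  rw [Finset.image_union]
  ext a
  simp only [Finset.mem_union]
  tauto

lemma inter_mixed (hzm : zm ∉ (Finset.univ.image Sum.inl : Finset (Pt ⊕ Fin 2)))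
    (hz1 : z1 ∉ (Finset.univ.image Sum.inl : Finset (Pt ⊕ Fin 2)))
    {Z W : Finset (Pt ⊕ Fin 2)} (hZ : Z ⊆ {zm, z1}) (hW : W ⊆ {zm, z1})
    (X Y : Finset Pt) :
    (X.image Sum.inl ∪ Z) ∩ (Y.image Sum.inl ∪ W)
      = (X ∩ Y).image Sum.inl ∪ (Z ∩ W) := by
  rw [Finset.image_inter _ _ Sum.inl_injective]
  ext a
  simp only [Finset.mem_inter, Finset.mem_union]
  constructor
  · rintro ⟨hx | hz, hy | hw⟩
    · exact Or.inl ⟨hx, hy⟩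
    · exact absurd hx (mem_z_not_inl hzm hz1 hW hw X)
    · exact absurd hy (mem_z_not_inl hzm hz1 hZ hz Y)
    · exact Or.inr ⟨hz, hw⟩
  · rintro (⟨hx, hy⟩ | ⟨hz, hw⟩)
    · exact ⟨Or.inl hx, Or.inl hy⟩
    · exact ⟨Or.inr hz, Or.inr hw⟩

lemma submod_mixed
    (hg : IsPolymatroid ((Finset.univ.image Sum.inl : Finset (Pt ⊕ Fin 2)) ∪ {zm, z1}) g)
    (hzm : zm ∉ (Finset.univ.image Sum.inl : Finset (Pt ⊕ Fin 2)))
    (hz1 : z1 ∉ (Finset.univ.image Sum.inl : Finset (Pt ⊕ Fin 2)))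
    {Z W : Finset (Pt ⊕ Fin 2)} (hZ : Z ⊆ {zm, z1}) (hW : W ⊆ {zm, z1})
    (X Y : Finset Pt) :
    g ((X ∪ Y).image Sum.inl ∪ (Z ∪ W)) + g ((X ∩ Y).image Sum.inl ∪ (Z ∩ W))
      ≤ g (X.image Sum.inl ∪ Z) + g (Y.image Sum.inl ∪ W) := by
  have h := hg.2.2
    (Finset.union_subset_union (Finset.image_subset_image (Finset.subset_univ X)) hZ)
    (Finset.union_subset_union (Finset.image_subset_image (Finset.subset_univ Y)) hW)
  rwa [union_mixed, inter_mixed hzm hz1 hZ hW] at h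

lemma mono_mixed
    (hg : IsPolymatroid ((Finset.univ.image Sum.inl : Finset (Pt ⊕ Fin 2)) ∪ {zm, z1}) g)
    {Z W : Finset (Pt ⊕ Fin 2)} (hW : W ⊆ {zm, z1}) (hZW : Z ⊆ W)
    {X Y : Finset Pt} (hXY : X ⊆ Y) :
    g (X.image Sum.inl ∪ Z) ≤ g (Y.image Sum.inl ∪ W) :=
  hg.2.1 (Finset.union_subset_union (Finset.image_subset_image hXY) hZW)
    (Finset.union_subset_union (Finset.image_subset_image (Finset.subset_univ Y)) hW)

end helpers

set_option maxHeartbeats 4000000 in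
/-- After two AK extension steps on the dual tic-tac-toe matroid (for the pairs
`(L^{−1}_j ∪ L^1_j, L^0_j)`, `j = −1, 1`), the new elements span a "line" `L` with
`g(L) = 2` and `g(L ∪ L^i_0) = 3` for every `i`, so `L^{−1}_0, L^0_0, L, L^1_0`
form a Vámos configuration. -/
theorem stmt_12 (zm z1 : Pt ⊕ Fin 2) (hne : zm ≠ z1)
    (hzm : zm ∉ (Finset.univ.image Sum.inl : Finset (Pt ⊕ Fin 2)))
    (hz1 : z1 ∉ (Finset.univ.image Sum.inl : Finset (Pt ⊕ Fin 2)))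
    (g : Finset (Pt ⊕ Fin 2) → ℝ)
    (hg : IsPolymatroid ((Finset.univ.image Sum.inl : Finset (Pt ⊕ Fin 2)) ∪ {zm, z1}) g)
    (hext : ∀ X : Finset Pt, g (X.image Sum.inl) = tttDualRank X)
    (hAKm1 : g ({zm} ∪ (lineL (-1) (-1) ∪ lineL 1 (-1)).image Sum.inl) =
        tttDualRank (lineL (-1) (-1) ∪ lineL 1 (-1)) ∧
      ∀ X' ⊆ lineL (-1) (-1) ∪ lineL 1 (-1),
        g (X'.image Sum.inl ∪ {zm}) - g {zm} =
          tttDualRank (X' ∪ lineL 0 (-1)) - tttDualRank (lineL 0 (-1)))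
    (hAK1 : g ({z1} ∪ (lineL (-1) 1 ∪ lineL 1 1).image Sum.inl) =
        tttDualRank (lineL (-1) 1 ∪ lineL 1 1) ∧
      ∀ X' ⊆ lineL (-1) 1 ∪ lineL 1 1,
        g (X'.image Sum.inl ∪ {z1}) - g {z1} =
          tttDualRank (X' ∪ lineL 0 1) - tttDualRank (lineL 0 1)) :
    g {zm, z1} = 2 ∧
    (∀ i : ZMod 3, g ({zm, z1} ∪ (lineL i 0).image Sum.inl) = 3) ∧
    IsVamosConfig g ((lineL (-1) 0).image Sum.inl) ((lineL 0 0).image Sum.inl)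
      {zm, z1} ((lineL 1 0).image Sum.inl) := by
  -- abbreviations for z-set inclusions
  have hz0 : (∅ : Finset (Pt ⊕ Fin 2)) ⊆ {zm, z1} := Finset.empty_subset _
  have hzZm : ({zm} : Finset (Pt ⊕ Fin 2)) ⊆ {zm, z1} := by
    intro x hx; simp only [Finset.mem_singleton] at hx; simp [hx]
  have hzZ1 : ({z1} : Finset (Pt ⊕ Fin 2)) ⊆ {zm, z1} := by
    intro x hx; simp only [Finset.mem_singleton] at hx; simp [hx]
  have hzL : ({zm, z1} : Finset (Pt ⊕ Fin 2)) ⊆ {zm, z1} := Finset.Subset.rfl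
  -- z-set algebra
  have e3 : ({zm} ∪ {z1} : Finset (Pt ⊕ Fin 2)) = {zm, z1} := by ext x; simp
  have e4 : ({zm} ∩ {z1} : Finset (Pt ⊕ Fin 2)) = ∅ := by
    ext x
    simp only [Finset.mem_inter, Finset.mem_singleton, Finset.notMem_empty, iff_false,
      not_and]
    rintro rfl rfl; exact hne rfl
  have e5 : ({zm, z1} ∩ {z1} : Finset (Pt ⊕ Fin 2)) = {z1} := by
    ext x
    simp only [Finset.mem_inter, Finset.mem_insert, Finset.mem_singleton]
    tauto
  have e6 : ({zm, z1} ∪ {z1} : Finset (Pt ⊕ Fin 2)) = {zm, z1} := by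
    ext x
    simp only [Finset.mem_union, Finset.mem_insert, Finset.mem_singleton]
    tauto
  have e7 : ({zm, z1} ∩ {zm} : Finset (Pt ⊕ Fin 2)) = {zm} := by
    ext x
    simp only [Finset.mem_inter, Finset.mem_insert, Finset.mem_singleton]
    tauto
  have e8 : ({zm, z1} ∪ {zm} : Finset (Pt ⊕ Fin 2)) = {zm, z1} := by
    ext x
    simp only [Finset.mem_union, Finset.mem_insert, Finset.mem_singleton]
    tauto
  -- pure dual rank values
  have dQm : tttDualRank (lineL 0 (-1)) = 2 :=
    dual_val 2 7 (by decide) (by decide) (by decide) (by norm_num)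
  have dQ1 : tttDualRank (lineL 0 1) = 2 :=
    dual_val 2 7 (by decide) (by decide) (by decide) (by norm_num)
  have dPm : tttDualRank (lineL (-1) (-1) ∪ lineL 1 (-1)) = 3 :=
    dual_val_ch 4 (by decide) (by decide) (by norm_num)
  have dP1 : tttDualRank (lineL (-1) 1 ∪ lineL 1 1) = 3 :=
    dual_val_ch 4 (by decide) (by decide) (by norm_num)
  have dPmQm : tttDualRank ((lineL (-1) (-1) ∪ lineL 1 (-1)) ∪ lineL 0 (-1)) = 4 :=
    dual_val 6 3 (by decide) (by decide) (by decide) (by norm_num)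
  have dP1Q1 : tttDualRank ((lineL (-1) 1 ∪ lineL 1 1) ∪ lineL 0 1) = 4 :=
    dual_val 6 3 (by decide) (by decide) (by decide) (by norm_num)
  have dbcQm : tttDualRank (lineL (-1) (-1) ∪ lineL 0 (-1)) = 3 :=
    dual_val_ch 4 (by decide) (by decide) (by norm_num)
  have dijQm : tttDualRank (lineL 1 (-1) ∪ lineL 0 (-1)) = 3 :=
    dual_val_ch 4 (by decide) (by decide) (by norm_num)
  have dabQ1 : tttDualRank (lineL (-1) 1 ∪ lineL 0 1) = 3 :=
    dual_val_ch 4 (by decide) (by decide) (by norm_num)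
  have dhiQ1 : tttDualRank (lineL 1 1 ∪ lineL 0 1) = 3 :=
    dual_val_ch 4 (by decide) (by decide) (by norm_num)
  have dcQm : tttDualRank ({((-1 : ZMod 3), (1 : ZMod 3))} ∪ lineL 0 (-1)) = 3 :=
    dual_val 3 6 (by decide) (by decide) (by decide) (by norm_num)
  have djQm : tttDualRank ({((1 : ZMod 3), (1 : ZMod 3))} ∪ lineL 0 (-1)) = 3 :=
    dual_val 3 6 (by decide) (by decide) (by decide) (by norm_num)
  have dSQm : tttDualRank (({((-1 : ZMod 3), (0 : ZMod 3)), ((1 : ZMod 3), (0 : ZMod 3))} :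
      Finset Pt) ∪ lineL 0 (-1)) = 4 :=
    dual_val 4 5 (by decide) (by decide) (by decide) (by norm_num)
  -- pure g values
  have gQm : g ((lineL 0 (-1)).image Sum.inl) = 2 := by rw [hext, dQm]
  have gQ1 : g ((lineL 0 1).image Sum.inl) = 2 := by rw [hext, dQ1]
  have gbc : g ((lineL (-1) (-1)).image Sum.inl) = 2 := by
    rw [hext]; exact dual_val 2 7 (by decide) (by decide) (by decide) (by norm_num)
  have gij : g ((lineL 1 (-1)).image Sum.inl) = 2 := by
    rw [hext]; exact dual_val 2 7 (by decide) (by decide) (by decide) (by norm_num)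
  have gab : g ((lineL (-1) 1).image Sum.inl) = 2 := by
    rw [hext]; exact dual_val 2 7 (by decide) (by decide) (by decide) (by norm_num)
  have ghi : g ((lineL 1 1).image Sum.inl) = 2 := by
    rw [hext]; exact dual_val 2 7 (by decide) (by decide) (by decide) (by norm_num)
  have gbcef : g ((lineL (-1) (-1) ∪ lineL 0 (-1)).image Sum.inl) = 3 := by rw [hext, dbcQm]
  have gijef : g ((lineL 1 (-1) ∪ lineL 0 (-1)).image Sum.inl) = 3 := by rw [hext, dijQm]
  have gabde : g ((lineL (-1) 1 ∪ lineL 0 1).image Sum.inl) = 3 := by rw [hext, dabQ1]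
  have ghide : g ((lineL 1 1 ∪ lineL 0 1).image Sum.inl) = 3 := by rw [hext, dhiQ1]
  have gPmQm : g (((lineL (-1) (-1) ∪ lineL 1 (-1)) ∪ lineL 0 (-1)).image Sum.inl) = 4 := by
    rw [hext, dPmQm]
  have gP1Q1 : g (((lineL (-1) 1 ∪ lineL 1 1) ∪ lineL 0 1).image Sum.inl) = 4 := by
    rw [hext, dP1Q1]
  have gCm : g ((lineB (-1)).image Sum.inl) = 3 := by
    rw [hext]; exact dual_val 3 6 (by decide) (by decide) (by decide) (by norm_num)
  have gC0 : g ((lineB 0).image Sum.inl) = 3 := by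
    rw [hext]; exact dual_val 3 6 (by decide) (by decide) (by decide) (by norm_num)
  have gC1 : g ((lineB 1).image Sum.inl) = 3 := by
    rw [hext]; exact dual_val 3 6 (by decide) (by decide) (by decide) (by norm_num)
  have gMm : g ((lineL (-1) 0).image Sum.inl) = 2 := by
    rw [hext]; exact dual_val 2 7 (by decide) (by decide) (by decide) (by norm_num)
  have gM0 : g ((lineL 0 0).image Sum.inl) = 2 := by
    rw [hext]; exact dual_val 2 7 (by decide) (by decide) (by decide) (by norm_num)
  have gM1 : g ((lineL 1 0).image Sum.inl) = 2 := by
    rw [hext]; exact dual_val 2 7 (by decide) (by decide) (by decide) (by norm_num)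
  have gMmM0 : g ((lineL (-1) 0 ∪ lineL 0 0).image Sum.inl) = 3 := by
    rw [hext]; exact dual_val_ch 4 (by decide) (by decide) (by norm_num)
  have gM0M1 : g ((lineL 0 0 ∪ lineL 1 0).image Sum.inl) = 3 := by
    rw [hext]; exact dual_val_ch 4 (by decide) (by decide) (by norm_num)
  have gMmM1 : g ((lineL (-1) 0 ∪ lineL 1 0).image Sum.inl) = 4 := by
    rw [hext]; exact dual_val 4 5 (by decide) (by decide) (by decide) (by norm_num)
  have gMmM0M1 : g ((lineL (-1) 0 ∪ lineL 0 0 ∪ lineL 1 0).image Sum.inl) = 4 := by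
    rw [hext]; exact dual_val 6 3 (by decide) (by decide) (by decide) (by norm_num)
  have gCmC1 : g ((lineB (-1) ∪ lineB 1).image Sum.inl) = 4 := by
    rw [hext]; exact dual_val 6 3 (by decide) (by decide) (by decide) (by norm_num)
  have gE : g ((Finset.univ : Finset Pt).image Sum.inl) = 4 := by
    rw [hext]; exact dual_val 9 0 (by decide) (by decide) (by decide) (by norm_num)
  have gCmM0 : g ((lineB (-1) ∪ lineL 0 0).image Sum.inl) = 4 := by
    rw [hext]; exact dual_val 5 4 (by decide) (by decide) (by decide) (by norm_num)
  have gC1M0 : g ((lineB 1 ∪ lineL 0 0).image Sum.inl) = 4 := by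
    rw [hext]; exact dual_val 5 4 (by decide) (by decide) (by decide) (by norm_num)
  have gMmPm : g ((lineL (-1) 0 ∪ (lineL (-1) (-1) ∪ lineL 1 (-1))).image Sum.inl) = 4 := by
    rw [hext]; exact dual_val 5 4 (by decide) (by decide) (by decide) (by norm_num)
  have gM1Pm : g ((lineL 1 0 ∪ (lineL (-1) (-1) ∪ lineL 1 (-1))).image Sum.inl) = 4 := by
    rw [hext]; exact dual_val 5 4 (by decide) (by decide) (by decide) (by norm_num)
  -- the ranks of the points zm and z1 are 1
  have gzm : g {zm} = 1 := by
    have h1 := hAKm1.1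
    rw [Finset.union_comm, dPm] at h1
    have h2 := hAKm1.2 _ (Finset.Subset.rfl :
      lineL (-1) (-1) ∪ lineL 1 (-1) ⊆ lineL (-1) (-1) ∪ lineL 1 (-1))
    rw [dPmQm, dQm, h1] at h2
    linarith
  have gz1 : g {z1} = 1 := by
    have h1 := hAK1.1
    rw [Finset.union_comm, dP1] at h1
    have h2 := hAK1.2 _ (Finset.Subset.rfl :
      lineL (-1) 1 ∪ lineL 1 1 ⊆ lineL (-1) 1 ∪ lineL 1 1)
    rw [dP1Q1, dQ1, h1] at h2
    linarith
  -- AK values for zm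
  have akm : ∀ X' : Finset Pt, X' ⊆ lineL (-1) (-1) ∪ lineL 1 (-1) → ∀ v : ℝ,
      tttDualRank (X' ∪ lineL 0 (-1)) = v → g (X'.image Sum.inl ∪ {zm}) = v - 1 := by
    intro X' hX' v hv
    have h := hAKm1.2 _ hX'
    rw [hv, gzm, dQm] at h
    linarith
  have ak1 : ∀ X' : Finset Pt, X' ⊆ lineL (-1) 1 ∪ lineL 1 1 → ∀ v : ℝ,
      tttDualRank (X' ∪ lineL 0 1) = v → g (X'.image Sum.inl ∪ {z1}) = v - 1 := by
    intro X' hX' v hv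
    have h := hAK1.2 _ hX'
    rw [hv, gz1, dQ1] at h
    linarith
  have gbczm : g ((lineL (-1) (-1)).image Sum.inl ∪ {zm}) = 2 := by
    have := akm _ (by decide) 3 dbcQm; linarith
  have gijzm : g ((lineL 1 (-1)).image Sum.inl ∪ {zm}) = 2 := by
    have := akm _ (by decide) 3 dijQm; linarith
  have gczm : g (({((-1 : ZMod 3), (1 : ZMod 3))} : Finset Pt).image Sum.inl ∪ {zm}) = 2 := by
    have := akm _ (by decide) 3 dcQm; linarith
  have gjzm : g (({((1 : ZMod 3), (1 : ZMod 3))} : Finset Pt).image Sum.inl ∪ {zm}) = 2 := by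
    have := akm _ (by decide) 3 djQm; linarith
  have gSzm : g (({((-1 : ZMod 3), (0 : ZMod 3)), ((1 : ZMod 3), (0 : ZMod 3))} :
      Finset Pt).image Sum.inl ∪ {zm}) = 3 := by
    have := akm _ (by decide) 4 dSQm; linarith
  have gPmzm : g ((lineL (-1) (-1) ∪ lineL 1 (-1)).image Sum.inl ∪ {zm}) = 3 := by
    have := akm _ (by decide) 4 dPmQm; linarith
  have gabz1 : g ((lineL (-1) 1).image Sum.inl ∪ {z1}) = 2 := by
    have := ak1 _ (by decide) 3 dabQ1; linarith
  have ghiz1 : g ((lineL 1 1).image Sum.inl ∪ {z1}) = 2 := by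
    have := ak1 _ (by decide) 3 dhiQ1; linarith
  have gP1z1 : g ((lineL (-1) 1 ∪ lineL 1 1).image Sum.inl ∪ {z1}) = 3 := by
    have := ak1 _ (by decide) 4 dP1Q1; linarith
  -- D1 : g(bcef ∪ zm) ≤ 3
  have D1 : g ((lineL (-1) (-1) ∪ lineL 0 (-1)).image Sum.inl ∪ {zm}) ≤ 3 := by
    have s := submod_mixed hg hzm hz1 hzZm hz0 (lineL (-1) (-1))
      (lineL (-1) (-1) ∪ lineL 0 (-1))
    rw [show lineL (-1) (-1) ∪ (lineL (-1) (-1) ∪ lineL 0 (-1)) =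
          lineL (-1) (-1) ∪ lineL 0 (-1) from by decide,
        show lineL (-1) (-1) ∩ (lineL (-1) (-1) ∪ lineL 0 (-1)) =
          lineL (-1) (-1) from by decide,
        Finset.union_empty, Finset.inter_empty, Finset.union_empty, Finset.union_empty] at s
    linarith [gbc, gbcef, gbczm]
  have D2 : g ((lineL 1 (-1) ∪ lineL 0 (-1)).image Sum.inl ∪ {zm}) ≤ 3 := by
    have s := submod_mixed hg hzm hz1 hzZm hz0 (lineL 1 (-1))
      (lineL 1 (-1) ∪ lineL 0 (-1))
    rw [show lineL 1 (-1) ∪ (lineL 1 (-1) ∪ lineL 0 (-1)) =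
          lineL 1 (-1) ∪ lineL 0 (-1) from by decide,
        show lineL 1 (-1) ∩ (lineL 1 (-1) ∪ lineL 0 (-1)) =
          lineL 1 (-1) from by decide,
        Finset.union_empty, Finset.inter_empty, Finset.union_empty, Finset.union_empty] at s
    linarith [gij, gijef, gijzm]
  -- D3 : g(Qm ∪ zm) ≤ 2
  have D3 : g ((lineL 0 (-1)).image Sum.inl ∪ {zm}) ≤ 2 := by
    have s := submod_mixed hg hzm hz1 hzZm hzZm (lineL (-1) (-1) ∪ lineL 0 (-1))
      (lineL 1 (-1) ∪ lineL 0 (-1))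
    rw [show (lineL (-1) (-1) ∪ lineL 0 (-1)) ∪ (lineL 1 (-1) ∪ lineL 0 (-1)) =
          (lineL (-1) (-1) ∪ lineL 1 (-1)) ∪ lineL 0 (-1) from by decide,
        show (lineL (-1) (-1) ∪ lineL 0 (-1)) ∩ (lineL 1 (-1) ∪ lineL 0 (-1)) =
          lineL 0 (-1) from by decide,
        Finset.union_self, Finset.inter_self] at s
    have m1 : g (((lineL (-1) (-1) ∪ lineL 1 (-1)) ∪ lineL 0 (-1)).image Sum.inl)
        ≤ g (((lineL (-1) (-1) ∪ lineL 1 (-1)) ∪ lineL 0 (-1)).image Sum.inl ∪ {zm}) := by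
      have := mono_mixed hg (Z := ∅) hzZm (Finset.empty_subset _)
        (Finset.Subset.rfl : (lineL (-1) (-1) ∪ lineL 1 (-1)) ∪ lineL 0 (-1) ⊆ _)
      rwa [Finset.union_empty] at this
    linarith [gPmQm]
  -- D4, D5, D6 : symmetric for z1
  have D4 : g ((lineL (-1) 1 ∪ lineL 0 1).image Sum.inl ∪ {z1}) ≤ 3 := by
    have s := submod_mixed hg hzm hz1 hzZ1 hz0 (lineL (-1) 1) (lineL (-1) 1 ∪ lineL 0 1)
    rw [show lineL (-1) 1 ∪ (lineL (-1) 1 ∪ lineL 0 1) = lineL (-1) 1 ∪ lineL 0 1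
          from by decide,
        show lineL (-1) 1 ∩ (lineL (-1) 1 ∪ lineL 0 1) = lineL (-1) 1 from by decide,
        Finset.union_empty, Finset.inter_empty, Finset.union_empty, Finset.union_empty] at s
    linarith [gab, gabde, gabz1]
  have D5 : g ((lineL 1 1 ∪ lineL 0 1).image Sum.inl ∪ {z1}) ≤ 3 := by
    have s := submod_mixed hg hzm hz1 hzZ1 hz0 (lineL 1 1) (lineL 1 1 ∪ lineL 0 1)
    rw [show lineL 1 1 ∪ (lineL 1 1 ∪ lineL 0 1) = lineL 1 1 ∪ lineL 0 1 from by decide,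
        show lineL 1 1 ∩ (lineL 1 1 ∪ lineL 0 1) = lineL 1 1 from by decide,
        Finset.union_empty, Finset.inter_empty, Finset.union_empty, Finset.union_empty] at s
    linarith [ghi, ghide, ghiz1]
  have D6 : g ((lineL 0 1).image Sum.inl ∪ {z1}) ≤ 2 := by
    have s := submod_mixed hg hzm hz1 hzZ1 hzZ1 (lineL (-1) 1 ∪ lineL 0 1)
      (lineL 1 1 ∪ lineL 0 1)
    rw [show (lineL (-1) 1 ∪ lineL 0 1) ∪ (lineL 1 1 ∪ lineL 0 1) =
          (lineL (-1) 1 ∪ lineL 1 1) ∪ lineL 0 1 from by decide,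
        show (lineL (-1) 1 ∪ lineL 0 1) ∩ (lineL 1 1 ∪ lineL 0 1) = lineL 0 1
          from by decide,
        Finset.union_self, Finset.inter_self] at s
    have m1 : g (((lineL (-1) 1 ∪ lineL 1 1) ∪ lineL 0 1).image Sum.inl)
        ≤ g (((lineL (-1) 1 ∪ lineL 1 1) ∪ lineL 0 1).image Sum.inl ∪ {z1}) := by
      have := mono_mixed hg (Z := ∅) hzZ1 (Finset.empty_subset _)
        (Finset.Subset.rfl : (lineL (-1) 1 ∪ lineL 1 1) ∪ lineL 0 1 ⊆ _)
      rwa [Finset.union_empty] at this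
    linarith [gP1Q1]
  -- D7, D8 : column -1 spans zm and z1
  have D7 : g ((lineB (-1)).image Sum.inl ∪ {zm}) ≤ 3 := by
    have s := submod_mixed hg hzm hz1 hz0 hzZm (lineB (-1)) (lineL (-1) (-1))
    rw [show lineB (-1) ∪ lineL (-1) (-1) = lineB (-1) from by decide,
        show lineB (-1) ∩ lineL (-1) (-1) = lineL (-1) (-1) from by decide,
        Finset.empty_union, Finset.empty_inter, Finset.union_empty, Finset.union_empty] at s
    linarith [gCm, gbc, gbczm]
  have D8 : g ((lineB (-1)).image Sum.inl ∪ {zm, z1}) ≤ 3 := by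
    have s := submod_mixed hg hzm hz1 hzZm hzZ1 (lineB (-1)) (lineL (-1) 1)
    rw [show lineB (-1) ∪ lineL (-1) 1 = lineB (-1) from by decide,
        show lineB (-1) ∩ lineL (-1) 1 = lineL (-1) 1 from by decide,
        e3, e4, Finset.union_empty] at s
    linarith [gab, gabz1, D7]
  -- D9, D10 : column 1 spans zm and z1
  have D9 : g ((lineB 1).image Sum.inl ∪ {zm}) ≤ 3 := by
    have s := submod_mixed hg hzm hz1 hz0 hzZm (lineB 1) (lineL 1 (-1))
    rw [show lineB 1 ∪ lineL 1 (-1) = lineB 1 from by decide,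
        show lineB 1 ∩ lineL 1 (-1) = lineL 1 (-1) from by decide,
        Finset.empty_union, Finset.empty_inter, Finset.union_empty, Finset.union_empty] at s
    linarith [gC1, gij, gijzm]
  have D10 : g ((lineB 1).image Sum.inl ∪ {zm, z1}) ≤ 3 := by
    have s := submod_mixed hg hzm hz1 hzZm hzZ1 (lineB 1) (lineL 1 1)
    rw [show lineB 1 ∪ lineL 1 1 = lineB 1 from by decide,
        show lineB 1 ∩ lineL 1 1 = lineL 1 1 from by decide,
        e3, e4, Finset.union_empty] at s
    linarith [ghi, ghiz1, D9]
  -- D11, D12 : column 0 spans zm and z1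
  have D11 : g ((lineB 0).image Sum.inl ∪ {zm}) ≤ 3 := by
    have s := submod_mixed hg hzm hz1 hz0 hzZm (lineB 0) (lineL 0 (-1))
    rw [show lineB 0 ∪ lineL 0 (-1) = lineB 0 from by decide,
        show lineB 0 ∩ lineL 0 (-1) = lineL 0 (-1) from by decide,
        Finset.empty_union, Finset.empty_inter, Finset.union_empty, Finset.union_empty] at s
    linarith [gC0, gQm, D3]
  have D12 : g ((lineB 0).image Sum.inl ∪ {zm, z1}) ≤ 3 := by
    have s := submod_mixed hg hzm hz1 hzZm hzZ1 (lineB 0) (lineL 0 1)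
    rw [show lineB 0 ∪ lineL 0 1 = lineB 0 from by decide,
        show lineB 0 ∩ lineL 0 1 = lineL 0 1 from by decide,
        e3, e4, Finset.union_empty] at s
    linarith [gQ1, D6, D11]
  -- D13, D14 : the whole ground set has rank 4
  have D13 : g ((Finset.univ : Finset Pt).image Sum.inl ∪ {zm}) ≤ 4 := by
    have s := submod_mixed hg hzm hz1 hz0 hzZm (Finset.univ)
      (lineL (-1) (-1) ∪ lineL 1 (-1))
    rw [show (Finset.univ : Finset Pt) ∪ (lineL (-1) (-1) ∪ lineL 1 (-1)) = Finset.univ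
          from by decide,
        show (Finset.univ : Finset Pt) ∩ (lineL (-1) (-1) ∪ lineL 1 (-1)) =
          lineL (-1) (-1) ∪ lineL 1 (-1) from by decide,
        Finset.empty_union, Finset.empty_inter, Finset.union_empty, Finset.union_empty] at s
    have gPm : g ((lineL (-1) (-1) ∪ lineL 1 (-1)).image Sum.inl) = 3 := by rw [hext, dPm]
    linarith [gE, gPmzm]
  have D14 : g ((Finset.univ : Finset Pt).image Sum.inl ∪ {zm, z1}) ≤ 4 := by
    have s := submod_mixed hg hzm hz1 hzZm hzZ1 (Finset.univ) (lineL (-1) 1 ∪ lineL 1 1)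
    rw [show (Finset.univ : Finset Pt) ∪ (lineL (-1) 1 ∪ lineL 1 1) = Finset.univ
          from by decide,
        show (Finset.univ : Finset Pt) ∩ (lineL (-1) 1 ∪ lineL 1 1) =
          lineL (-1) 1 ∪ lineL 1 1 from by decide,
        e3, e4, Finset.union_empty] at s
    have gP1' : g ((lineL (-1) 1 ∪ lineL 1 1).image Sum.inl) = 3 := by rw [hext, dP1]
    linarith [gP1', gP1z1, D13]
  -- upper bound 4 for everything
  have upper : ∀ (X : Finset Pt) (Z : Finset (Pt ⊕ Fin 2)), Z ⊆ {zm, z1} →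
      g (X.image Sum.inl ∪ Z) ≤ 4 := by
    intro X Z hZ
    have := mono_mixed hg (W := {zm, z1}) hzL hZ (Finset.subset_univ X)
    linarith [D14]
  -- D15 : g {zm, z1} ≤ 2
  have D15 : g ({zm, z1} : Finset (Pt ⊕ Fin 2)) ≤ 2 := by
    have s := submod_mixed hg hzm hz1 hzZm hzZ1 (∅ : Finset Pt) (∅ : Finset Pt)
    rw [e3, e4] at s
    simp only [Finset.union_self, Finset.inter_self, Finset.image_empty, Finset.empty_union,
      Finset.union_empty] at s
    linarith [hg.1, gzm, gz1]
  -- D16 : g (P1 ∪ {zm,z1}) ≥ 4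
  have D16 : (4 : ℝ) ≤ g ((lineL (-1) 1 ∪ lineL 1 1).image Sum.inl ∪ {zm, z1}) := by
    have s := submod_mixed hg hzm hz1 hzL hzZm (lineL (-1) 1 ∪ lineL 1 1)
      (lineL (-1) (-1) ∪ lineL 1 (-1))
    rw [show (lineL (-1) 1 ∪ lineL 1 1) ∪ (lineL (-1) (-1) ∪ lineL 1 (-1)) =
          lineB (-1) ∪ lineB 1 from by decide,
        show (lineL (-1) 1 ∪ lineL 1 1) ∩ (lineL (-1) (-1) ∪ lineL 1 (-1)) =
          ({((-1 : ZMod 3), (0 : ZMod 3)), ((1 : ZMod 3), (0 : ZMod 3))} : Finset Pt)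
          from by decide,
        e8, e7] at s
    have m1 : g ((lineB (-1) ∪ lineB 1).image Sum.inl)
        ≤ g ((lineB (-1) ∪ lineB 1).image Sum.inl ∪ {zm, z1}) := by
      have := mono_mixed hg (Z := ∅) hzL (Finset.empty_subset _)
        (Finset.Subset.rfl : lineB (-1) ∪ lineB 1 ⊆ _)
      rwa [Finset.union_empty] at this
    linarith [gCmC1, gSzm, gPmzm]
  -- D17 : g {zm,z1} ≥ 2, hence g {zm,z1} = 2
  have D17 : (2 : ℝ) ≤ g ({zm, z1} : Finset (Pt ⊕ Fin 2)) := by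
    have s := submod_mixed hg hzm hz1 hzL hzZ1 (∅ : Finset Pt) (lineL (-1) 1 ∪ lineL 1 1)
    rw [e6, e5] at s
    simp only [Finset.empty_union, Finset.empty_inter, Finset.image_empty,
      Finset.union_empty] at s
    linarith [D16, gz1, gP1z1]
  have T1 : g ({zm, z1} : Finset (Pt ⊕ Fin 2)) = 2 := le_antisymm D15 D17
  -- D18, D19, D20 : lower bounds for g (M_i ∪ {zm,z1})
  have D18 : (3 : ℝ) ≤ g ((lineL (-1) 0).image Sum.inl ∪ {zm, z1}) := by
    have s := submod_mixed hg hzm hz1 hzL hzZm (lineL (-1) 0)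
      (lineL (-1) (-1) ∪ lineL 1 (-1))
    rw [show lineL (-1) 0 ∩ (lineL (-1) (-1) ∪ lineL 1 (-1)) =
          ({((-1 : ZMod 3), (1 : ZMod 3))} : Finset Pt) from by decide,
        e8, e7] at s
    have m1 : g ((lineL (-1) 0 ∪ (lineL (-1) (-1) ∪ lineL 1 (-1))).image Sum.inl)
        ≤ g ((lineL (-1) 0 ∪ (lineL (-1) (-1) ∪ lineL 1 (-1))).image Sum.inl ∪ {zm, z1}) := by
      have := mono_mixed hg (Z := ∅) hzL (Finset.empty_subset _)
        (Finset.Subset.rfl : lineL (-1) 0 ∪ (lineL (-1) (-1) ∪ lineL 1 (-1)) ⊆ _)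
      rwa [Finset.union_empty] at this
    linarith [gMmPm, gczm, gPmzm]
  have D19 : (3 : ℝ) ≤ g ((lineL 1 0).image Sum.inl ∪ {zm, z1}) := by
    have s := submod_mixed hg hzm hz1 hzL hzZm (lineL 1 0)
      (lineL (-1) (-1) ∪ lineL 1 (-1))
    rw [show lineL 1 0 ∩ (lineL (-1) (-1) ∪ lineL 1 (-1)) =
          ({((1 : ZMod 3), (1 : ZMod 3))} : Finset Pt) from by decide,
        e8, e7] at s
    have m1 : g ((lineL 1 0 ∪ (lineL (-1) (-1) ∪ lineL 1 (-1))).image Sum.inl)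
        ≤ g ((lineL 1 0 ∪ (lineL (-1) (-1) ∪ lineL 1 (-1))).image Sum.inl ∪ {zm, z1}) := by
      have := mono_mixed hg (Z := ∅) hzL (Finset.empty_subset _)
        (Finset.Subset.rfl : lineL 1 0 ∪ (lineL (-1) (-1) ∪ lineL 1 (-1)) ⊆ _)
      rwa [Finset.union_empty] at this
    linarith [gM1Pm, gjzm, gPmzm]
  have D20 : (3 : ℝ) ≤ g ((lineL 0 0).image Sum.inl ∪ {zm, z1}) := by
    have s := submod_mixed hg hzm hz1 hzL hzL (lineL 0 0) (lineB (-1))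
    rw [show lineL 0 0 ∪ lineB (-1) = lineB (-1) ∪ lineL 0 0 from by decide,
        show lineL 0 0 ∩ lineB (-1) = (∅ : Finset Pt) from by decide,
        Finset.union_self, Finset.inter_self, Finset.image_empty, Finset.empty_union] at s
    have m1 : g ((lineB (-1) ∪ lineL 0 0).image Sum.inl)
        ≤ g ((lineB (-1) ∪ lineL 0 0).image Sum.inl ∪ {zm, z1}) := by
      have := mono_mixed hg (Z := ∅) hzL (Finset.empty_subset _)
        (Finset.Subset.rfl : lineB (-1) ∪ lineL 0 0 ⊆ _)
      rwa [Finset.union_empty] at this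
    linarith [gCmM0, T1, D8]
  -- upper bounds for g (M_i ∪ {zm,z1})
  have U18 : g ((lineL (-1) 0).image Sum.inl ∪ {zm, z1}) ≤ 3 := by
    have := mono_mixed hg (Z := {zm, z1}) hzL Finset.Subset.rfl
      (show lineL (-1) 0 ⊆ lineB (-1) from by decide)
    linarith [D8]
  have U19 : g ((lineL 1 0).image Sum.inl ∪ {zm, z1}) ≤ 3 := by
    have := mono_mixed hg (Z := {zm, z1}) hzL Finset.Subset.rfl
      (show lineL 1 0 ⊆ lineB 1 from by decide)
    linarith [D10]
  have U20 : g ((lineL 0 0).image Sum.inl ∪ {zm, z1}) ≤ 3 := by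
    have := mono_mixed hg (Z := {zm, z1}) hzL Finset.Subset.rfl
      (show lineL 0 0 ⊆ lineB 0 from by decide)
    linarith [D12]
  have T2m : g ((lineL (-1) 0).image Sum.inl ∪ {zm, z1}) = 3 := le_antisymm U18 D18
  have T20 : g ((lineL 0 0).image Sum.inl ∪ {zm, z1}) = 3 := le_antisymm U20 D20
  have T21 : g ((lineL 1 0).image Sum.inl ∪ {zm, z1}) = 3 := le_antisymm U19 D19
  -- triples
  have T3a : g ((lineL (-1) 0 ∪ lineL 0 0).image Sum.inl ∪ {zm, z1}) = 4 := by
    have s := submod_mixed hg hzm hz1 hzL hzL (lineL (-1) 0 ∪ lineL 0 0) (lineB (-1))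
    rw [show (lineL (-1) 0 ∪ lineL 0 0) ∪ lineB (-1) = lineB (-1) ∪ lineL 0 0
          from by decide,
        show (lineL (-1) 0 ∪ lineL 0 0) ∩ lineB (-1) = lineL (-1) 0 from by decide,
        Finset.union_self, Finset.inter_self] at s
    have m1 : g ((lineB (-1) ∪ lineL 0 0).image Sum.inl)
        ≤ g ((lineB (-1) ∪ lineL 0 0).image Sum.inl ∪ {zm, z1}) := by
      have := mono_mixed hg (Z := ∅) hzL (Finset.empty_subset _)
        (Finset.Subset.rfl : lineB (-1) ∪ lineL 0 0 ⊆ _)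
      rwa [Finset.union_empty] at this
    have hub := upper (lineL (-1) 0 ∪ lineL 0 0) {zm, z1} hzL
    have hlb : (4 : ℝ) ≤ g ((lineL (-1) 0 ∪ lineL 0 0).image Sum.inl ∪ {zm, z1}) := by
      linarith [gCmM0, D18, D8]
    linarith
  have T3b : g ((lineL 0 0 ∪ lineL 1 0).image Sum.inl ∪ {zm, z1}) = 4 := by
    have s := submod_mixed hg hzm hz1 hzL hzL (lineL 0 0 ∪ lineL 1 0) (lineB 1)
    rw [show (lineL 0 0 ∪ lineL 1 0) ∪ lineB 1 = lineB 1 ∪ lineL 0 0 from by decide,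
        show (lineL 0 0 ∪ lineL 1 0) ∩ lineB 1 = lineL 1 0 from by decide,
        Finset.union_self, Finset.inter_self] at s
    have m1 : g ((lineB 1 ∪ lineL 0 0).image Sum.inl)
        ≤ g ((lineB 1 ∪ lineL 0 0).image Sum.inl ∪ {zm, z1}) := by
      have := mono_mixed hg (Z := ∅) hzL (Finset.empty_subset _)
        (Finset.Subset.rfl : lineB 1 ∪ lineL 0 0 ⊆ _)
      rwa [Finset.union_empty] at this
    have hub := upper (lineL 0 0 ∪ lineL 1 0) {zm, z1} hzL
    have hlb : (4 : ℝ) ≤ g ((lineL 0 0 ∪ lineL 1 0).image Sum.inl ∪ {zm, z1}) := by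
      linarith [gC1M0, D19, D10]
    linarith
  have T3c : g ((lineL (-1) 0 ∪ lineL 1 0).image Sum.inl ∪ {zm, z1}) = 4 := by
    have hub := upper (lineL (-1) 0 ∪ lineL 1 0) {zm, z1} hzL
    have m1 : g ((lineL (-1) 0 ∪ lineL 1 0).image Sum.inl)
        ≤ g ((lineL (-1) 0 ∪ lineL 1 0).image Sum.inl ∪ {zm, z1}) := by
      have := mono_mixed hg (Z := ∅) hzL (Finset.empty_subset _)
        (Finset.Subset.rfl : lineL (-1) 0 ∪ lineL 1 0 ⊆ _)
      rwa [Finset.union_empty] at this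
    linarith [gMmM1]
  have T3d : g ((lineL (-1) 0 ∪ lineL 0 0 ∪ lineL 1 0).image Sum.inl ∪ {zm, z1}) = 4 := by
    have hub := upper (lineL (-1) 0 ∪ lineL 0 0 ∪ lineL 1 0) {zm, z1} hzL
    have m1 : g ((lineL (-1) 0 ∪ lineL 0 0 ∪ lineL 1 0).image Sum.inl)
        ≤ g ((lineL (-1) 0 ∪ lineL 0 0 ∪ lineL 1 0).image Sum.inl ∪ {zm, z1}) := by
      have := mono_mixed hg (Z := ∅) hzL (Finset.empty_subset _)
        (Finset.Subset.rfl : lineL (-1) 0 ∪ lineL 0 0 ∪ lineL 1 0 ⊆ _)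
      rwa [Finset.union_empty] at this
    linarith [gMmM0M1]
  -- assemble the goal
  refine ⟨T1, ?_, ?_⟩
  · intro i
    have hi : i = 0 ∨ i = 1 ∨ i = -1 := by
      revert i; decide
    rcases hi with h | h | h <;> rw [h, Finset.union_comm]
    · exact T20
    · exact T21
    · exact T2m
  · refine ⟨gMm, gM0, T1, gM1, ?_, T2m, T20, ?_, ?_, ?_, ?_, ?_, ?_, ?_, ?_⟩
    · rw [← Finset.image_union]; exact gMmM0
    · rw [← Finset.image_union]; exact gM0M1
    · rw [Finset.union_comm]; exact T21
    · rw [← Finset.image_union]; exact gMmM1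
    · rw [← Finset.image_union]; exact T3a
    · rw [← Finset.image_union, ← Finset.image_union]; exact gMmM0M1
    · rw [Finset.union_right_comm, ← Finset.image_union]; exact T3c
    · rw [Finset.union_right_comm, ← Finset.image_union]; exact T3b
    · rw [Finset.union_right_comm, ← Finset.image_union, ← Finset.image_union]; exact T3d
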